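/- Let T be a tree, let (u_n)_{n ∈ ℕ} be a sequence of pairwise distinct vertices of T, and let H be the convex hull of {u_n : n ∈ ℕ} in T. If H is not almost a ray, then there is a non-degenerate labeling l : V(T) → [0,∞) such that the sequence (u_n)_{n ∈ ℕ} has a Cauchy subsequence in the ultrametric space (V(T), d_l) but the set {v ∈ V(T) : l(v) = 1} is infinite. -/

import Mathlib

open SimpleGraph

/-- `d` is an ultrametric on `V`: a metric satisfying the strong triangle inequality. -/
def IsUltrametricOn {V : Type*} (d : V → V → ℝ) : Prop :=
  (∀ x y, 0 ≤ d x y) ∧ (∀ x y, d x y = d y x) ∧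
    (∀ x y, d x y = 0 ↔ x = y) ∧
    ∀ x y z, d x y ≤ max (d x z) (d z y)

/-- The vertex labeling `l` of the graph `G` is non-degenerate:
`max {l u, l v} > 0` for every edge `{u, v}`. -/
def NondegenerateLabeling {V : Type*} (G : SimpleGraph V) (l : V → ℝ) : Prop :=
  ∀ u v, G.Adj u v → 0 < max (l u) (l v)

/-- `d` is the function `d_l` generated by the vertex labeling `l` on the tree `G`:
`d u u = 0`, and for `u ≠ v`, `d u v` is the maximum of the labels of the vertices of
the (unique) path joining `u` and `v`. -/
def IsLabelDist {V : Type*} (G : SimpleGraph V) (l : V → ℝ) (d : V → V → ℝ) : Prop :=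
  (∀ u, d u u = 0) ∧
    ∀ u v : V, u ≠ v → ∀ p : G.Walk u v, p.IsPath →
      IsGreatest (l '' {w | w ∈ p.support}) (d u v)

/-- `x` is a Cauchy sequence with respect to the distance function `d`. -/
def CauchyWith {V : Type*} (d : V → V → ℝ) (x : ℕ → V) : Prop :=
  ∀ ε : ℝ, 0 < ε → ∃ N : ℕ, ∀ m ≥ N, ∀ n ≥ N, d (x m) (x n) < ε

/-- The set `A` is totally bounded with respect to the distance function `d`:
for every `r > 0` it is covered by finitely many open balls of radius `r` centered in `A`. -/
def TotallyBoundedWith {V : Type*} (d : V → V → ℝ) (A : Set V) : Prop :=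
  ∀ r : ℝ, 0 < r → ∃ s : Finset V, ↑s ⊆ A ∧ ∀ x ∈ A, ∃ c ∈ s, d c x < r

/-- The space `V` with distance `d` is compact: every cover of `V` by open balls
(given by center–radius pairs) contains a finite subcover. -/
def CompactWith {V : Type*} (d : V → V → ℝ) : Prop :=
  ∀ F : Set (V × ℝ), (∀ x : V, ∃ p ∈ F, d p.1 x < p.2) →
    ∃ s : Finset (V × ℝ), ↑s ⊆ F ∧ ∀ x : V, ∃ p ∈ s, d p.1 x < p.2

/-- The subgraph `R` of `G` is a ray: its vertices can be enumerated as a sequence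
`f 0, f 1, …` of pairwise distinct vertices, with edges exactly `{f n, f (n+1)}`. -/
def IsRaySubgraph {V : Type*} {G : SimpleGraph V} (R : G.Subgraph) : Prop :=
  ∃ f : ℕ → V, Function.Injective f ∧ R.verts = Set.range f ∧
    ∀ x y, R.Adj x y ↔ ∃ n, (x = f n ∧ y = f (n + 1)) ∨ (x = f (n + 1) ∧ y = f n)

/-- The subgraph `T₀` of `G` is a finite subtree. -/
def IsFiniteSubtree {V : Type*} {G : SimpleGraph V} (T₀ : G.Subgraph) : Prop :=
  T₀.verts.Finite ∧ T₀.coe.IsTree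

/-- The subgraph `H` of `G` is almost a ray: `H` is the union of a ray and a finite subtree. -/
def IsAlmostRaySubgraph {V : Type*} {G : SimpleGraph V} (H : G.Subgraph) : Prop :=
  ∃ R T₀ : G.Subgraph, IsRaySubgraph R ∧ IsFiniteSubtree T₀ ∧ T₀ ⊔ R = H

/-- The graph `G` is almost a ray: `G` is the union of a ray and a finite subtree. -/
def IsAlmostRayGraph {V : Type*} (G : SimpleGraph V) : Prop :=
  ∃ R T₀ : G.Subgraph, IsRaySubgraph R ∧ IsFiniteSubtree T₀ ∧ T₀ ⊔ R = ⊤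

/-- `H` is the convex hull of the vertex set `A` in `G`: a subtree containing `A`
which is a subgraph of every subtree of `G` containing `A`. -/
def IsConvexHullSubtree {V : Type*} (G : SimpleGraph V) (A : Set V) (H : G.Subgraph) : Prop :=
  H.coe.IsTree ∧ A ⊆ H.verts ∧
    ∀ H' : G.Subgraph, H'.coe.IsTree → A ⊆ H'.verts → H ≤ H'


set_option linter.unusedSectionVars false
set_option maxHeartbeats 1000000
namespace Stmt9

variable {V : Type*} [DecidableEq V] {G : SimpleGraph V} (hG : G.IsTree)

noncomputable def pth (x y : V) : G.Walk x y := (hG.existsUnique_path x y).choose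

lemma pth_isPath (x y : V) : (pth hG x y).IsPath :=
  (hG.existsUnique_path x y).choose_spec.1

lemma pth_unique {x y : V} {p : G.Walk x y} (hp : p.IsPath) : p = pth hG x y :=
  (hG.existsUnique_path x y).choose_spec.2 p hp

section Kit

lemma pth_support_subset {x y : V} (W : G.Walk x y) :
    (pth hG x y).support ⊆ W.support := by
  rw [← pth_unique hG W.bypass_isPath]; exact W.support_bypass_subset

lemma pth_edges_subset {x y : V} (W : G.Walk x y) :
    (pth hG x y).edges ⊆ W.edges := by
  rw [← pth_unique hG W.bypass_isPath]; exact W.edges_bypass_subset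

lemma pth_refl (x : V) : pth hG x x = Walk.nil := pth_unique hG (Walk.IsPath.nil) ▸ rfl

lemma pth_reverse (x y : V) : pth hG y x = (pth hG x y).reverse :=
  (pth_unique hG ((pth_isPath hG x y).reverse)).symm

lemma pth_split {x y z : V} (hy : y ∈ (pth hG x z).support) :
    (pth hG x y).append (pth hG y z) = pth hG x z := by
  have h1 : (pth hG x z).takeUntil y hy = pth hG x y :=
    pth_unique hG ((pth_isPath hG x z).takeUntil hy)
  have h2 : (pth hG x z).dropUntil y hy = pth hG y z :=
    pth_unique hG ((pth_isPath hG x z).dropUntil hy)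
  rw [← h1, ← h2, Walk.take_spec]

lemma pth_support_trans {x y z w : V} (hy : y ∈ (pth hG x z).support)
    (hw : w ∈ (pth hG x y).support) : w ∈ (pth hG x z).support := by
  rw [← pth_split hG hy, Walk.mem_support_append_iff]; exact Or.inl hw

lemma pth_support_trans' {x y z w : V} (hy : y ∈ (pth hG x z).support)
    (hw : w ∈ (pth hG y z).support) : w ∈ (pth hG x z).support := by
  rw [← pth_split hG hy, Walk.mem_support_append_iff]; exact Or.inr hw

lemma pth_split_inter {x y z w : V} (hy : y ∈ (pth hG x z).support)
    (h1 : w ∈ (pth hG x y).support) (h2 : w ∈ (pth hG y z).support) : w = y := by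
  by_contra hne
  have hnodup := (pth_isPath hG x z).support_nodup
  rw [← pth_split hG hy, Walk.support_append] at hnodup
  have hdisj := List.disjoint_of_nodup_append hnodup
  have h2' : w ∈ (pth hG y z).support.tail := by
    have hc := (pth hG y z).support_eq_cons
    rw [hc] at h2
    rcases List.mem_cons.1 h2 with h | h
    · exact absurd h hne
    · exact h
  exact hdisj h1 h2'

lemma pth_antisymm {r x y : V} (h1 : x ∈ (pth hG r y).support)
    (h2 : y ∈ (pth hG r x).support) : x = y := by
  have e1 := congrArg Walk.length (pth_split hG h1)
  have e2 := congrArg Walk.length (pth_split hG h2)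
  rw [Walk.length_append] at e1 e2
  have : (pth hG x y).length = 0 := by omega
  exact (Walk.nil_iff_length_eq.2 this).eq

lemma pth_concat {r x y : V} (hadj : G.Adj x y) (hy : y ∉ (pth hG r x).support) :
    pth hG r y = (pth hG r x).concat hadj := by
  refine (pth_unique hG ?_).symm
  rw [Walk.isPath_def, Walk.support_concat]
  exact List.Nodup.append (pth_isPath hG r x).support_nodup (List.nodup_singleton y)
    (by simpa using hy)

lemma pth_adj_dichotomy {r x y : V} (hadj : G.Adj x y) :
    x ∈ (pth hG r y).support ∨ y ∈ (pth hG r x).support := by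
  by_cases hy : y ∈ (pth hG r x).support
  · exact Or.inr hy
  · left
    rw [pth_concat hG hadj hy, Walk.support_concat,
      List.mem_append]
    exact Or.inl (Walk.end_mem_support _)

lemma pth_not_nil {x y : V} (h : x ≠ y) : ¬ (pth hG x y).Nil :=
  Walk.not_nil_of_ne h

lemma append_getVert_one {x y z : V} (p : G.Walk x y) (q : G.Walk y z) (hp : ¬p.Nil) :
    (p.append q).getVert 1 = p.getVert 1 := by
  cases p with
  | nil => simp at hp
  | cons h r => simp [Walk.cons_append, Walk.getVert_cons_succ]

/-- K10: second vertex of a path prefix. -/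
lemma pth_getVert_one_eq {x y z : V} (hy : y ∈ (pth hG x z).support) (hxy : y ≠ x) :
    (pth hG x y).getVert 1 = (pth hG x z).getVert 1 := by
  rw [← pth_split hG hy]
  exact (append_getVert_one _ _ (pth_not_nil hG (Ne.symm hxy))).symm

lemma pth_length_pos {x y : V} (h : x ≠ y) : 0 < (pth hG x y).length :=
  Walk.not_nil_iff_lt_length.1 (pth_not_nil hG h)

lemma pth_adj_getVert_one {x y : V} (h : x ≠ y) :
    G.Adj x ((pth hG x y).getVert 1) := by
  have := (pth hG x y).adj_getVert_succ (i := 0) (pth_length_pos hG h)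
  simpa using this

lemma pth_getVert_one_ne {x y : V} (h : x ≠ y) : (pth hG x y).getVert 1 ≠ x :=
  (pth_adj_getVert_one hG h).ne'

lemma pth_getVert_one_mem {x y : V} (h : x ≠ y) :
    (pth hG x y).getVert 1 ∈ (pth hG x y).support :=
  Walk.mem_support_iff_exists_getVert.2 ⟨1, rfl, pth_length_pos hG h⟩

end Kit

open Classical in
/-- The last ray index on the path from the root to `w`. -/
noncomputable def eIdx (r : V) (g : ℕ → V) (w : V) : ℕ :=
  Nat.findGreatest (fun i => g i ∈ (pth hG r w).support) (pth hG r w).length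

/-! ### Ray machinery -/

section Ray

variable {r : V} {g : ℕ → V}
  (hg0 : g 0 = r)
  (hadj : ∀ k, G.Adj (g k) (g (k + 1)))
  (hch : ∀ k, g k ∈ (pth hG r (g (k + 1))).support)

include hg0 hadj hch

lemma ray_concat (k : ℕ) :
    pth hG r (g (k + 1)) = (pth hG r (g k)).concat (hadj k) := by
  apply pth_concat
  intro hmem
  exact (hadj k).ne (pth_antisymm hG (hch k) hmem)

lemma ray_length (k : ℕ) : (pth hG r (g k)).length = k := by
  induction k with
  | zero => subst hg0; rw [pth_refl]; rfl
  | succ n ih => rw [ray_concat hG hg0 hadj hch n, Walk.length_concat, ih]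

lemma ray_supp (k : ℕ) : ∀ x, x ∈ (pth hG r (g k)).support ↔ ∃ i, i ≤ k ∧ x = g i := by
  induction k with
  | zero =>
    intro x
    subst hg0
    rw [pth_refl]
    simp only [Walk.support_nil, List.mem_singleton]
    constructor
    · rintro rfl; exact ⟨0, le_refl _, rfl⟩
    · rintro ⟨i, hi, rfl⟩; rw [Nat.le_zero.1 hi]
  | succ n ih =>
    intro x
    rw [ray_concat hG hg0 hadj hch n, Walk.support_concat,
      List.mem_append, List.mem_singleton, ih]
    constructor
    · rintro (⟨i, hi, rfl⟩ | rfl)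
      · exact ⟨i, by omega, rfl⟩
      · exact ⟨n + 1, le_refl _, rfl⟩
    · rintro ⟨i, hi, rfl⟩
      rcases Nat.lt_or_ge i (n + 1) with h | h
      · exact Or.inl ⟨i, by omega, rfl⟩
      · right; congr 1; omega


omit hadj hch in
lemma eIdx_spec (w : V) : g (eIdx hG r g w) ∈ (pth hG r w).support := by
  classical
  unfold eIdx
  exact Nat.findGreatest_spec (P := fun i => g i ∈ (pth hG r w).support) (m := 0)
    (Nat.zero_le _) (by show g 0 ∈ _; rw [hg0]; exact Walk.start_mem_support _)

lemma eIdx_ge {w : V} {i : ℕ} (h : g i ∈ (pth hG r w).support) :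
    i ≤ eIdx hG r g w := by
  classical
  unfold eIdx
  apply Nat.le_findGreatest (P := fun i => g i ∈ (pth hG r w).support) _ h
  have hsplit := congrArg Walk.length (pth_split hG h)
  rw [Walk.length_append, ray_length hG hg0 hadj hch i] at hsplit
  omega

lemma eIdx_g (k : ℕ) : eIdx hG r g (g k) = k := by
  classical
  refine le_antisymm ?_ (eIdx_ge hG hg0 hadj hch (Walk.end_mem_support _))
  have hle : eIdx hG r g (g k) ≤ (pth hG r (g k)).length := by
    unfold eIdx; exact Nat.findGreatest_le _
  rw [ray_length hG hg0 hadj hch k] at hle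
  exact hle

lemma ray_inj : Function.Injective g := by
  intro i j h
  have := eIdx_g hG hg0 hadj hch (g := g) i
  rw [h, eIdx_g hG hg0 hadj hch] at this
  omega

/-- vertices of a ray segment. -/
lemma seg_mem {a b : ℕ} (hab : a ≤ b) {x : V} (hx : x ∈ (pth hG (g a) (g b)).support) :
    ∃ i, a ≤ i ∧ i ≤ b ∧ x = g i := by
  have hga : g a ∈ (pth hG r (g b)).support :=
    (ray_supp hG hg0 hadj hch b _).2 ⟨a, hab, rfl⟩
  have hxb : x ∈ (pth hG r (g b)).support := pth_support_trans' hG hga hx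
  obtain ⟨i, hib, rfl⟩ := (ray_supp hG hg0 hadj hch b _).1 hxb
  refine ⟨i, ?_, hib, rfl⟩
  by_contra hlt
  push_neg at hlt
  have h1 : g i ∈ (pth hG r (g a)).support :=
    (ray_supp hG hg0 hadj hch a _).2 ⟨i, by omega, rfl⟩
  have := pth_split_inter hG hga h1 hx
  have := eIdx_g hG hg0 hadj hch (g := g) i
  rw [this] at *
  -- g i = g a, so i = a, contradiction with hlt
  have hia := ray_inj hG hg0 hadj hch (pth_split_inter hG hga h1 hx)
  omega

/-- Key: membership in the part of the path hanging off the ray. -/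
lemma eIdx_hang {w x : V} (hx : x ∈ (pth hG (g (eIdx hG r g w)) w).support) :
    eIdx hG r g x = eIdx hG r g w := by
  set ew := eIdx hG r g w with hew
  have hgew : g ew ∈ (pth hG r w).support := eIdx_spec hG hg0 w
  have hxw : x ∈ (pth hG r w).support := pth_support_trans' hG hgew hx
  refine le_antisymm ?_ ?_
  · -- e x ≤ e w
    have hx' : g (eIdx hG r g x) ∈ (pth hG r x).support := eIdx_spec hG hg0 x
    exact eIdx_ge hG hg0 hadj hch (pth_support_trans hG hxw hx')
  · -- e w ≤ e x
    by_cases hxe : x = g ew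
    · subst hxe
      rw [eIdx_g hG hg0 hadj hch]
    · apply eIdx_ge hG hg0 hadj hch
      by_contra hnot
      -- then g ew ∈ pth x w part
      have hsplit := pth_split hG hxw
      have hmem : g ew ∈ (pth hG x w).support := by
        have h' := hgew
        rw [← hsplit, Walk.mem_support_append_iff] at h'
        rcases h' with h | h
        · exact absurd h hnot
        · exact h
      exact hxe ((pth_split_inter hG hx (Walk.start_mem_support _) hmem).symm)
  
lemma eIdx_pth_le {x y z : V} (hz : z ∈ (pth hG x y).support) :
    eIdx hG r g z ≤ max (eIdx hG r g x) (eIdx hG r g y) := by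
  have h1 : g (eIdx hG r g z) ∈ (pth hG r z).support := eIdx_spec hG hg0 z
  have h2 : (pth hG r z).support ⊆ ((pth hG r x).append (pth hG x z)).support :=
    pth_support_subset hG _
  have h3 : (pth hG x z).support ⊆ (pth hG x y).support := by
    intro w hw
    rw [← pth_split hG hz, Walk.mem_support_append_iff]; exact Or.inl hw
  have h4 : (pth hG x y).support ⊆ ((pth hG x r).append (pth hG r y)).support :=
    pth_support_subset hG _
  have := h2 h1
  rw [Walk.mem_support_append_iff] at this
  rcases this with h | h
  · exact le_max_of_le_left (eIdx_ge hG hg0 hadj hch h)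
  · have := h4 (h3 h)
    rw [Walk.mem_support_append_iff] at this
    rcases this with h' | h'
    · rw [pth_reverse, Walk.support_reverse, List.mem_reverse] at h'
      exact le_max_of_le_left (eIdx_ge hG hg0 hadj hch h')
    · exact le_max_of_le_right (eIdx_ge hG hg0 hadj hch h')

end Ray

/-! ### Subgraph transfer -/

lemma hull_path_mem (S : G.Subgraph) (hconn : S.coe.Connected) {x y : V}
    (hx : x ∈ S.verts) (hy : y ∈ S.verts) (pp : G.Walk x y) (hpp : pp.IsPath)
    (hpu : ∀ (q : G.Walk x y), q.IsPath → q = pp) :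
    (∀ z ∈ pp.support, z ∈ S.verts) ∧ (∀ e ∈ pp.edges, e ∈ S.edgeSet) := by
  obtain ⟨W₀⟩ := hconn.preconnected ⟨x, hx⟩ ⟨y, hy⟩
  let W : G.Walk x y := W₀.map S.hom
  have hsupp : ∀ z ∈ W.support, z ∈ S.verts := by
    intro z hz
    rw [show W.support = (W₀.map S.hom).support from rfl, Walk.support_map, List.mem_map] at hz
    obtain ⟨⟨z', hz'⟩, _, rfl⟩ := hz
    exact hz'
  have hedges : ∀ e ∈ W.edges, e ∈ S.edgeSet := by
    intro e he
    rw [show W.edges = (W₀.map S.hom).edges from rfl, Walk.edges_map, List.mem_map] at he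
    obtain ⟨e', he', rfl⟩ := he
    induction e' with
    | _ a b =>
      have : S.coe.Adj a b := Walk.adj_of_mem_edges _ he'
      exact (S.mem_edgeSet).2 ((Subgraph.coe_adj S a b) ▸ this)
  have hbp : W.bypass = pp := hpu _ W.bypass_isPath
  constructor
  · intro z hz
    exact hsupp z (W.support_bypass_subset (hbp ▸ hz))
  · intro e he
    exact hedges e (W.edges_bypass_subset (hbp ▸ he))

lemma walk_transfer (S : G.Subgraph) : ∀ {x y : V} (W : G.Walk x y)
    (hs : ∀ z ∈ W.support, z ∈ S.verts) (_ : ∀ e ∈ W.edges, e ∈ S.edgeSet)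
    (hx : x ∈ S.verts) (hy : y ∈ S.verts),
    S.coe.Reachable ⟨x, hx⟩ ⟨y, hy⟩ := by
  intro x y W
  induction W with
  | nil =>
    intro _ _ hx hy
    exact Reachable.refl _
  | @cons a b cc hadj p ih =>
    intro hs he hx hy
    have hb : b ∈ S.verts := hs b (by simp)
    have hadj' : S.coe.Adj ⟨a, hx⟩ ⟨b, hb⟩ := by
      rw [Subgraph.coe_adj]
      exact (S.mem_edgeSet).1 (he s(a, b) (by simp))
    exact (hadj'.reachable).trans
      (ih (fun z hz => hs z (by simp [hz])) (fun e h' => he e (by simp [h'])) hb hy)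

lemma subgraph_acyclic (hac : G.IsAcyclic) (S : G.Subgraph) : S.coe.IsAcyclic := by
  intro v c hc
  exact hac (c.map S.hom) (hc.map Subgraph.hom_injective)

/-! ### The extraction lemma -/

lemma ext_lemma {β : Type*} [DecidableEq β] (B : Set ℕ) (c : ℕ → β) (A : ℕ → Finset β)
    (hyp : ∀ (F : Finset β) (N : ℕ), ∃ m, m ∈ B ∧ N < m ∧ c m ∉ F) :
    ∃ n dd : ℕ → ℕ, StrictMono n ∧ StrictMono dd ∧ (∀ k, n k ∈ B) ∧ (∀ k, dd k ∈ B) ∧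
      (∀ j k, c (n j) = c (n k) → j = k) ∧ (∀ j k, c (dd j) ≠ c (n k)) ∧
      (∀ k, c (n k) ∉ A k) := by
  choose pick h1 h2 h3 using hyp
  let dfun : Finset ℕ → ℕ → ℕ := fun s k => pick (s.image c ∪ A k) (s.sup id)
  let nfun : Finset ℕ → ℕ → ℕ :=
    fun s k => pick (insert (c (dfun s k)) (s.image c ∪ A k)) (dfun s k)
  let S : ℕ → Finset ℕ :=
    fun k => Nat.rec ∅ (fun k s => insert (nfun s k) (insert (dfun s k) s)) k
  have hS : ∀ k, S (k + 1) = insert (nfun (S k) k) (insert (dfun (S k) k) (S k)) :=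
    fun k => rfl
  set n : ℕ → ℕ := fun k => nfun (S k) k with hn
  set dd : ℕ → ℕ := fun k => dfun (S k) k with hdd
  have hdlt : ∀ k, ∀ x ∈ S k, x < dd k := by
    intro k x hx
    have := h2 ((S k).image c ∪ A k) ((S k).sup id)
    calc x ≤ (S k).sup id := Finset.le_sup (f := id) hx
    _ < dd k := this
  have hdn : ∀ k, dd k < n k := fun k => h2 _ _
  have hmono : ∀ j k, j ≤ k → S j ⊆ S k := by
    intro j k hjk
    induction k with
    | zero => rw [Nat.le_zero.1 hjk]
    | succ m ih =>
      rcases Nat.lt_or_ge j (m + 1) with h | h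
      · refine (ih (by omega)).trans ?_
        rw [hS m]
        intro x hx
        simp [Finset.mem_insert, hx]
      · have : j = m + 1 := by omega
        rw [this]
    -- done
  have hmemS : ∀ j k, j < k → n j ∈ S k ∧ dd j ∈ S k := by
    intro j k hjk
    have h1' : n j ∈ S (j + 1) := by rw [hS j]; simp [hn]
    have h2' : dd j ∈ S (j + 1) := by rw [hS j]; simp [hdd]
    exact ⟨hmono _ _ hjk h1', hmono _ _ hjk h2'⟩
  have hnS : StrictMono n := by
    intro j k hjk
    have := (hmemS j k hjk).1
    exact lt_trans (hdlt k _ this) (hdn k)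
  have hddS : StrictMono dd := by
    intro j k hjk
    exact hdlt k _ (hmemS j k hjk).2
  have hcn : ∀ k, c (n k) ∉ insert (c (dd k)) ((S k).image c ∪ A k) := fun k => h3 _ _
  have hcd : ∀ k, c (dd k) ∉ (S k).image c ∪ A k := fun k => h3 _ _
  refine ⟨n, dd, hnS, hddS, fun k => h1 _ _, fun k => h1 _ _, ?_, ?_, ?_⟩
  · intro j k hjk
    by_contra hne
    rcases Ne.lt_or_gt hne with h | h
    · exact hcn k (hjk ▸ Finset.mem_insert_of_mem (Finset.mem_union_left _
        (Finset.mem_image_of_mem c (hmemS j k h).1)))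
    · exact hcn j (hjk.symm ▸ Finset.mem_insert_of_mem (Finset.mem_union_left _
        (Finset.mem_image_of_mem c (hmemS k j h).1)))
  · intro j k heq
    rcases lt_trichotomy j k with h | h | h
    · exact hcn k (heq ▸ Finset.mem_insert_of_mem (Finset.mem_union_left _
        (Finset.mem_image_of_mem c (hmemS j k h).2)))
    · subst h
      exact hcn j (heq ▸ Finset.mem_insert_self _ _)
    · exact hcd j (heq.symm ▸ Finset.mem_union_left _
        (Finset.mem_image_of_mem c (hmemS k j h).1))
  · intro k hk
    exact hcn k (Finset.mem_insert_of_mem (Finset.mem_union_right _ hk))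


lemma one_div_cast_le {a b : ℕ} (h : a ≤ b) : (1 : ℝ) / (b + 1) ≤ 1 / (a + 1) := by
  apply one_div_le_one_div_of_le
  · positivity
  · have : (a : ℝ) ≤ b := Nat.cast_le.2 h
    linarith

lemma gen {l : V → ℝ} (u : ℕ → V) (hu : Function.Injective u)
    (φ : ℕ → ℕ) (hφ : StrictMono φ)
    (bd : ∀ j k, j ≤ k → ∃ W : G.Walk (u (φ j)) (u (φ k)),
      ∀ x ∈ W.support, l x ≤ 1 / (j + 1))
    {d : V → V → ℝ} (hd : IsLabelDist G l d) : CauchyWith d (u ∘ φ) := by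
  intro ε hε
  obtain ⟨N, hN⟩ := exists_nat_one_div_lt hε
  refine ⟨N, ?_⟩
  have key : ∀ a : ℕ, N ≤ a → ∀ (x y : V), x ≠ y →
      ∀ W : G.Walk x y, (∀ z ∈ W.support, l z ≤ 1 / (a + 1)) → d x y < ε := by
    intro a ha x y hne W hW
    have hgr := hd.2 x y hne W.bypass W.bypass_isPath
    obtain ⟨z, hz, hzd⟩ := hgr.1
    have h1 : l z ≤ 1 / (a + 1) := hW z (W.support_bypass_subset hz)
    have h2 : (1 : ℝ) / (a + 1) ≤ 1 / (N + 1) := one_div_cast_le ha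
    rw [← hzd]
    calc l z ≤ 1 / (a + 1) := h1
    _ ≤ 1 / (N + 1) := h2
    _ < ε := hN
  have hne' : ∀ a b : ℕ, a ≠ b → u (φ a) ≠ u (φ b) := by
    intro a b hab h
    exact hab (hφ.injective (hu h))
  intro m hm n hn
  rcases lt_trichotomy m n with h | h | h
  · obtain ⟨W, hW⟩ := bd m n (le_of_lt h)
    exact key m hm _ _ (hne' _ _ (by omega)) W hW
  · subst h
    rw [Function.comp_apply, hd.1]
    exact hε
  · obtain ⟨W, hW⟩ := bd n m (le_of_lt h)
    refine key n hn _ _ (hne' _ _ (by omega)) W.reverse ?_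
    intro z hz
    rw [Walk.support_reverse, List.mem_reverse] at hz
    exact hW z hz


end Stmt9

open Stmt9 in
theorem stmt9 {V : Type*} (G : SimpleGraph V) (hG : G.IsTree)
    (u : ℕ → V) (hu : Function.Injective u)
    (H : G.Subgraph) (hH : IsConvexHullSubtree G (Set.range u) H)
    (hnot : ¬ IsAlmostRaySubgraph H) :
    ∃ l : V → ℝ, (∀ w, 0 ≤ l w) ∧ NondegenerateLabeling G l ∧
      {w : V | l w = 1}.Infinite ∧
      ∀ d : V → V → ℝ, IsLabelDist G l d →
        ∃ φ : ℕ → ℕ, StrictMono φ ∧ CauchyWith d (u ∘ φ) := by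
  classical
  set r : V := u 0 with hr
  set Bset : V → Set ℕ := fun w => {n | w ∈ (pth hG r (u n)).support} with hBset
  set Good : V → Prop := fun w => (Bset w).Infinite with hGood
  have hGoodr : Good r := by
    have : Bset r = Set.univ := Set.eq_univ_of_forall (fun n => Walk.start_mem_support _)
    rw [hGood]
    simp only [this]
    exact Set.infinite_univ
  have hullp : ∀ {x y : V}, x ∈ H.verts → y ∈ H.verts →
      (∀ z ∈ (pth hG x y).support, z ∈ H.verts) ∧
      (∀ e ∈ (pth hG x y).edges, e ∈ H.edgeSet) := by
    intro x y hx hy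
    exact hull_path_mem H hH.1.isConnected hx hy (pth hG x y) (pth_isPath hG x y)
      (fun q hq => pth_unique hG hq)
  have hrH : r ∈ H.verts := hH.2.1 ⟨0, rfl⟩
  have huH : ∀ n, u n ∈ H.verts := fun n => hH.2.1 ⟨n, rfl⟩
  have hGoodH : ∀ w, Good w → w ∈ H.verts := by
    intro w hw
    obtain ⟨m, hm⟩ := hw.nonempty
    exact (hullp hrH (huH m)).1 w hm
  by_cases hcase : ∃ v, Good v ∧
      ∀ w, (G.Adj v w ∧ v ∈ (pth hG r w).support) → ¬ Good w
  -- ==================== CASE A ====================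
  · obtain ⟨v, hv, hnochild⟩ := hcase
    have hfin1 : {m | u m = v}.Finite := by
      apply Set.Subsingleton.finite
      intro a ha b hb
      exact hu (ha.trans hb.symm)
    set B : Set ℕ := Bset v \ {m | u m = v} with hB
    have hBinf : B.Infinite := hv.diff hfin1
    set c : ℕ → V := fun m => (pth hG v (u m)).getVert 1 with hc
    have humv : ∀ m, m ∈ B → u m ≠ v := fun m hm heq => hm.2 heq
    have hmemB : ∀ m, m ∈ B → v ∈ (pth hG r (u m)).support := fun m hm => hm.1
    have hcmem : ∀ m, m ∈ B → c m ∈ (pth hG v (u m)).support := fun m hm =>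
      pth_getVert_one_mem hG (Ne.symm (humv m hm))
    have hcadj : ∀ m, m ∈ B → G.Adj v (c m) := fun m hm =>
      pth_adj_getVert_one hG (Ne.symm (humv m hm))
    have hcne : ∀ m, m ∈ B → c m ≠ v := fun m hm =>
      pth_getVert_one_ne hG (Ne.symm (humv m hm))
    have hcrm : ∀ m, m ∈ B → c m ∈ (pth hG r (u m)).support := fun m hm =>
      pth_support_trans' hG (hmemB m hm) (hcmem m hm)
    have hyp : ∀ (F : Finset V) (N : ℕ), ∃ m, m ∈ B ∧ N < m ∧ c m ∉ F := by
      intro F N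
      by_contra hno
      push_neg at hno
      have hB' : (B \ Set.Iic N).Infinite := hBinf.diff (Set.finite_Iic N)
      have hsub : (B \ Set.Iic N) ⊆ ⋃ f ∈ (F : Set V), {m | m ∈ B \ Set.Iic N ∧ c m = f} := by
        intro m hm
        have : c m ∈ F := hno m hm.1 (by simpa using hm.2)
        exact Set.mem_biUnion this ⟨hm, rfl⟩
      have hex : ∃ f ∈ (F : Set V), {m | m ∈ B \ Set.Iic N ∧ c m = f}.Infinite := by
        by_contra hall
        push_neg at hall
        have : (⋃ f ∈ (F : Set V), {m | m ∈ B \ Set.Iic N ∧ c m = f}).Finite :=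
          Set.Finite.biUnion F.finite_toSet (fun f hf => hall f hf)
        exact hB' (this.subset hsub)
      obtain ⟨c₀, -, hfib⟩ := hex
      obtain ⟨m₀, hm₀⟩ := hfib.nonempty
      have hm₀B : m₀ ∈ B := hm₀.1.1
      have hceq : c₀ = c m₀ := hm₀.2.symm
      subst hceq
      have hadjv : G.Adj v (c m₀) := hcadj m₀ hm₀B
      have hchild : v ∈ (pth hG r (c m₀)).support := by
        rcases pth_adj_dichotomy hG (r := r) hadjv with h | h
        · exact h
        · exact absurd (pth_split_inter hG (hmemB m₀ hm₀B) h (hcmem m₀ hm₀B))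
            (hcne m₀ hm₀B)
      have hgood : Good (c m₀) := by
        apply hfib.mono
        intro m hm
        show c m₀ ∈ (pth hG r (u m)).support
        rw [← hm.2]
        exact hcrm m hm.1.1
      exact hnochild _ ⟨hadjv, hchild⟩ hgood
    obtain ⟨n, dd, hnmono, hddmono, hnB, hddB, hcinj, hcdisj, -⟩ :=
      ext_lemma B c (fun _ => (∅ : Finset V)) hyp
    have hdisj : ∀ (x : V) (j k : ℕ), x ∈ (pth hG v (u (n j))).support → x ≠ v →
        x ∈ (pth hG v (u (n k))).support → j = k := by
      intro x j k hxj hxv hxk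
      have e1 := pth_getVert_one_eq hG hxj hxv
      have e2 := pth_getVert_one_eq hG hxk hxv
      exact hcinj j k (by rw [hc]; dsimp only; rw [← e1, ← e2])
    set l : V → ℝ := fun x => if x = v then 0 else
      if h : ∃ k, x ∈ (pth hG v (u (n k))).support then 1 / ((Nat.find h : ℝ) + 2)
      else 1 with hl
    have hlv : l v = 0 := by rw [hl]; simp
    have hl1 : ∀ x, x ≠ v → (¬ ∃ k, x ∈ (pth hG v (u (n k))).support) → l x = 1 := by
      intro x h1 h2
      rw [hl]
      simp only [if_neg h1, dif_neg h2]
    have hlmem : ∀ (x : V) (h : ∃ k, x ∈ (pth hG v (u (n k))).support), x ≠ v →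
        l x = 1 / ((Nat.find h : ℝ) + 2) := by
      intro x h hxv
      rw [hl]
      simp only [if_neg hxv, dif_pos h]
    have hl0 : ∀ w, 0 ≤ l w := by
      intro w
      rw [hl]
      dsimp only
      split_ifs with h1 h2
      · exact le_refl 0
      · positivity
      · norm_num
    have hlpos : ∀ x, x ≠ v → 0 < l x := by
      intro x hxv
      rw [hl]
      dsimp only
      rw [if_neg hxv]
      split_ifs with h2
      · positivity
      · norm_num
    have hnd : NondegenerateLabeling G l := by
      intro a b hab
      by_cases ha : a = v
      · subst ha
        exact lt_max_of_lt_right (hlpos b (Ne.symm hab.ne))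
      · exact lt_max_of_lt_left (hlpos a ha)
    have hinf : {w : V | l w = 1}.Infinite := by
      have hrange : (Set.range (fun t => u (dd t))).Infinite :=
        Set.infinite_range_of_injective (fun a b hab => hddmono.injective (hu hab))
      apply hrange.mono
      rintro x ⟨t, rfl⟩
      show l (u (dd t)) = 1
      apply hl1 _ (humv _ (hddB t))
      rintro ⟨k, hk⟩
      have e1 := pth_getVert_one_eq hG hk (humv _ (hddB t))
      exact hcdisj t k (by rw [hc]; dsimp only; rw [← e1])
    have hbd : ∀ j k, j ≤ k → ∃ W : G.Walk (u (n j)) (u (n k)),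
        ∀ x ∈ W.support, l x ≤ 1 / (j + 1) := by
      intro j k hjk
      refine ⟨(pth hG v (u (n j))).reverse.append (pth hG v (u (n k))), ?_⟩
      intro x hx
      rw [Walk.mem_support_append_iff] at hx
      have hx' : x ∈ (pth hG v (u (n j))).support ∨ x ∈ (pth hG v (u (n k))).support := by
        rcases hx with h | h
        · left; rwa [Walk.support_reverse, List.mem_reverse] at h
        · right; exact h
      by_cases hxv : x = v
      · rw [hxv, hlv]; positivity
      · have hex : ∃ k', x ∈ (pth hG v (u (n k'))).support := by
          rcases hx' with h | h
          exacts [⟨j, h⟩, ⟨k, h⟩]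
        rw [hlmem x hex hxv]
        have hge : j ≤ Nat.find hex := by
          rcases hx' with h | h
          · have := hdisj x _ _ (Nat.find_spec hex) hxv h
            omega
          · have := hdisj x _ _ (Nat.find_spec hex) hxv h
            omega
        have hcast : ((j : ℝ) + 1) ≤ (Nat.find hex : ℝ) + 2 := by
          have : (j : ℝ) ≤ Nat.find hex := Nat.cast_le.2 hge
          linarith
        exact one_div_le_one_div_of_le (by positivity) hcast
    exact ⟨l, hl0, hnd, hinf, fun d hd => ⟨n, hnmono, gen u hu n hnmono hbd hd⟩⟩
  -- ==================== CASE B ====================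
  · push_neg at hcase
    -- every good vertex has a good child: build the ray
    have hstep : ∀ p : {w : V // Good w}, ∃ q : {w : V // Good w},
        G.Adj p.1 q.1 ∧ p.1 ∈ (pth hG r q.1).support := by
      rintro ⟨w, hw⟩
      obtain ⟨w', hcw, hgw'⟩ := hcase w hw
      exact ⟨⟨w', hgw'⟩, hcw⟩
    choose next hnext1 hnext2 using hstep
    set gg : ℕ → {w : V // Good w} := fun k => next^[k] ⟨r, hGoodr⟩ with hggdef
    set g : ℕ → V := fun k => (gg k).1 with hgdef
    have hg0 : g 0 = r := rfl
    have hggsucc : ∀ k, gg (k + 1) = next (gg k) := fun k =>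
      Function.iterate_succ_apply' next k _
    have hgadj : ∀ k, G.Adj (g k) (g (k + 1)) := by
      intro k
      rw [hgdef]
      dsimp only
      rw [hggsucc k]
      exact hnext1 (gg k)
    have hgch : ∀ k, g k ∈ (pth hG r (g (k + 1))).support := by
      intro k
      rw [hgdef]
      dsimp only
      rw [hggsucc k]
      exact hnext2 (gg k)
    have hgGood : ∀ k, Good (g k) := fun k => (gg k).2
    set e : V → ℕ := fun w => eIdx hG r g w with hedef
    have heSpec : ∀ w, g (e w) ∈ (pth hG r w).support := fun w => eIdx_spec hG hg0 w
    have heGe : ∀ {w : V} {i : ℕ}, g i ∈ (pth hG r w).support → i ≤ e w :=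
      fun h => eIdx_ge hG hg0 hgadj hgch h
    have heg : ∀ k, e (g k) = k := fun k => eIdx_g hG hg0 hgadj hgch k
    have hginj : Function.Injective g := ray_inj hG hg0 hgadj hgch
    have hseg : ∀ {a b : ℕ}, a ≤ b → ∀ {x : V}, x ∈ (pth hG (g a) (g b)).support →
        ∃ i, a ≤ i ∧ i ≤ b ∧ x = g i := fun {a b} hab {x} hx => seg_mem hG hg0 hgadj hgch hab hx
    have hhang : ∀ {w x : V}, x ∈ (pth hG (g (e w)) w).support → e x = e w :=
      fun hx => eIdx_hang hG hg0 hgadj hgch hx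
    have hraysupp : ∀ (k : ℕ) (x : V), x ∈ (pth hG r (g k)).support ↔ ∃ i, i ≤ k ∧ x = g i :=
      ray_supp hG hg0 hgadj hgch
    by_cases hB1 : {m | u m ∈ Set.range g}.Infinite
    -- ============ CASE B1 : infinitely many u's lie on the ray ============
    · set M : Set ℕ := {m | u m ∈ Set.range g} with hMdef
      set c : ℕ → ℕ := fun m => e (u m) with hcB
      have hMc : ∀ m ∈ M, g (c m) = u m := by
        rintro m ⟨i, hi⟩
        rw [hcB]
        dsimp only
        rw [← hi, heg]
      have hyp : ∀ (F : Finset ℕ) (N : ℕ), ∃ m, m ∈ M ∧ N < m ∧ c m ∉ F := by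
        intro F N
        have hM' : (M \ Set.Iic N).Infinite := hB1.diff (Set.finite_Iic N)
        have hinj : Set.InjOn c (M \ Set.Iic N) := by
          intro a ha b hb hab
          have hg' := congrArg g hab
          rw [hMc a ha.1, hMc b hb.1] at hg'
          exact hu hg'
        have himg : (c '' (M \ Set.Iic N)).Infinite := hM'.image hinj
        have hns : ¬ (c '' (M \ Set.Iic N)) ⊆ ↑F :=
          fun hsub => himg (F.finite_toSet.subset hsub)
        obtain ⟨val, ⟨m, hm, rfl⟩, hnF⟩ := Set.not_subset.1 hns
        exact ⟨m, hm.1, by simpa using hm.2, hnF⟩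
      obtain ⟨n, dd, hnmono, -, hnM, -, -, -, hnA⟩ :=
        ext_lemma M c (fun k => Finset.range k) hyp
      set p : ℕ → ℕ := fun k => c (n k) with hpdef
      have hpk : ∀ k, k ≤ p k := by
        intro k
        have h1 := hnA k
        rw [Finset.mem_range] at h1
        have h2 : k ≤ c (n k) := by omega
        exact h2
      have hup : ∀ k, u (n k) = g (p k) := fun k => (hMc _ (hnM k)).symm
      set l : V → ℝ := fun x =>
        if hx : ∃ i, g i = x then 1 / ((Nat.find hx : ℝ) + 1) else 1 with hl
      have hlg : ∀ i, l (g i) = 1 / ((i : ℝ) + 1) := by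
        intro i
        have hx : ∃ j, g j = g i := ⟨i, rfl⟩
        have hfind : Nat.find hx = i := hginj (Nat.find_spec hx)
        rw [hl]
        dsimp only
        rw [dif_pos hx, hfind]
      have hlpos : ∀ w, 0 < l w := by
        intro w
        rw [hl]
        dsimp only
        split_ifs with h1
        · positivity
        · norm_num
      have hl0 : ∀ w, 0 ≤ l w := fun w => le_of_lt (hlpos w)
      have hnd : NondegenerateLabeling G l := fun a b _ => lt_max_of_lt_left (hlpos a)
      have hcompl : (Set.range g)ᶜ.Infinite := by
        by_contra hninf
        rw [Set.not_infinite] at hninf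
        apply hnot
        set M₀ : ℕ := hninf.toFinset.sup e with hM₀def
        have hM₀ : ∀ w, w ∉ Set.range g → e w ≤ M₀ :=
          fun w hw => Finset.le_sup (f := e) (hninf.mem_toFinset.2 hw)
        have hgH : ∀ i, g i ∈ H.verts := fun i => hGoodH _ (hgGood i)
        have hrayH : ∀ i, H.Adj (g i) (g (i + 1)) := by
          intro i
          obtain ⟨m, hm⟩ := (hgGood (i + 1)).nonempty
          have hedge : s(g i, g (i + 1)) ∈ (pth hG r (g (i + 1))).edges := by
            rw [ray_concat hG hg0 hgadj hgch i, Walk.edges_concat]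
            simp
          have hsub2 : (pth hG r (g (i + 1))).edges ⊆ (pth hG r (u m)).edges := by
            rw [← pth_split hG hm, Walk.edges_append]
            intro x hx
            exact List.mem_append.2 (Or.inl hx)
          have := (hullp hrH (huH m)).2 _ (hsub2 hedge)
          exact (Subgraph.mem_edgeSet).1 this
        let R : G.Subgraph :=
          { verts := Set.range (fun m => g (M₀ + m))
            Adj := fun x y => ∃ m, (x = g (M₀ + m) ∧ y = g (M₀ + m + 1)) ∨
              (x = g (M₀ + m + 1) ∧ y = g (M₀ + m))
            adj_sub := by
              rintro x y ⟨m, ⟨rfl, rfl⟩ | ⟨rfl, rfl⟩⟩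
              · exact hgadj _
              · exact (hgadj _).symm
            edge_vert := by
              rintro x y ⟨m, ⟨rfl, -⟩ | ⟨rfl, -⟩⟩
              · exact ⟨m, rfl⟩
              · exact ⟨m + 1, rfl⟩
            symm := by
              constructor
              rintro x y ⟨m, ⟨rfl, rfl⟩ | ⟨rfl, rfl⟩⟩
              · exact ⟨m, Or.inr ⟨rfl, rfl⟩⟩
              · exact ⟨m, Or.inl ⟨rfl, rfl⟩⟩ }
        let T₀ : G.Subgraph :=
          { verts := {w | w ∈ H.verts ∧ e w ≤ M₀}
            Adj := fun x y => H.Adj x y ∧ e x ≤ M₀ ∧ e y ≤ M₀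
            adj_sub := fun h => H.adj_sub h.1
            edge_vert := fun h => ⟨H.edge_vert h.1, h.2.1⟩
            symm := ⟨fun x y h => ⟨h.1.symm, h.2.2, h.2.1⟩⟩ }
        refine ⟨R, T₀, ?_, ⟨?_, ?_⟩, ?_⟩
        -- R is a ray subgraph
        · refine ⟨fun m => g (M₀ + m), ?_, rfl, fun x y => Iff.rfl⟩
          intro a b hab
          have := hginj hab
          omega
        -- T₀ is finite
        · apply Set.Finite.subset (Set.Finite.union hninf (Set.Finite.image g (Set.finite_Iic M₀)))
          rintro w ⟨hwH, hwe⟩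
          by_cases hwr : ∃ i, g i = w
          · obtain ⟨i, rfl⟩ := hwr
            right
            rw [heg] at hwe
            exact ⟨i, hwe, rfl⟩
          · left
            simpa using hwr
        -- T₀ is a tree
        · have hrT : r ∈ T₀.verts := by
            refine ⟨hrH, ?_⟩
            rw [← hg0, heg]
            exact Nat.zero_le _
          constructor
          · -- connected
            have hnev : Nonempty (T₀.verts) := ⟨⟨r, hrT⟩⟩
            refine SimpleGraph.Connected.mk ?_
            rintro ⟨x, hx⟩ ⟨y, hy⟩
            have hsupmem : ∀ z ∈ (pth hG x y).support, z ∈ T₀.verts := by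
              intro z hz
              refine ⟨(hullp hx.1 hy.1).1 z hz, ?_⟩
              have := eIdx_pth_le hG hg0 hgadj hgch (r := r) hz
              exact le_trans this (max_le hx.2 hy.2)
            apply walk_transfer T₀ (pth hG x y) hsupmem _ hx hy
            intro ed hed
            induction ed with
            | _ a b =>
              rw [Subgraph.mem_edgeSet]
              refine ⟨(Subgraph.mem_edgeSet).1 ((hullp hx.1 hy.1).2 _ hed), ?_, ?_⟩
              · exact (hsupmem a ((pth hG x y).fst_mem_support_of_mem_edges hed)).2
              · exact (hsupmem b ((pth hG x y).snd_mem_support_of_mem_edges hed)).2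
          · -- acyclic
            exact subgraph_acyclic hG.IsAcyclic T₀
        -- T₀ ⊔ R = H
        · have aux : ∀ x y, H.Adj x y → x ∈ (pth hG r y).support → (T₀ ⊔ R).Adj x y := by
            intro x y hxy hmem
            have hGxy : G.Adj x y := H.adj_sub hxy
            have hynot : y ∉ (pth hG r x).support := by
              intro hy
              exact hGxy.ne (pth_antisymm hG hmem hy)
            have hdec : pth hG r y = (pth hG r x).concat hGxy := pth_concat hG hGxy hynot
            by_cases hyr : ∃ i, g i = y
            · obtain ⟨i, rfl⟩ := hyr
              obtain ⟨a, hai, rfl⟩ := (hraysupp i x).1 hmem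
              have hlen : i = a + 1 := by
                have h1 := ray_length hG hg0 hgadj hgch i
                rw [hdec, Walk.length_concat, ray_length hG hg0 hgadj hgch a] at h1
                omega
              subst hlen
              by_cases hM : M₀ ≤ a
              · apply Subgraph.sup_adj.2
                right
                exact ⟨a - M₀, Or.inl
                  ⟨(congrArg g (by omega : a = M₀ + (a - M₀))),
                   (congrArg g (by omega : a + 1 = M₀ + (a - M₀) + 1))⟩⟩
              · apply Subgraph.sup_adj.2
                left
                refine ⟨hxy, ?_, ?_⟩
                · rw [heg]; omega
                · rw [heg]; omega
            · have hyM : e y ≤ M₀ := hM₀ y (by simpa using hyr)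
              have hexy : e x ≤ e y := by
                apply heGe
                rw [hdec, Walk.support_concat, List.mem_append]
                exact Or.inl (heSpec x)
              apply Subgraph.sup_adj.2
              left
              exact ⟨hxy, le_trans hexy hyM, hyM⟩
          apply Subgraph.ext
          · apply Set.ext
            intro w
            rw [Subgraph.verts_sup]
            constructor
            · rintro (hw | ⟨m, rfl⟩)
              · exact hw.1
              · exact hgH _
            · intro hw
              by_cases he' : e w ≤ M₀
              · exact Or.inl ⟨hw, he'⟩
              · right
                by_cases hwr : ∃ i, g i = w
                · obtain ⟨i, rfl⟩ := hwr
                  rw [heg] at he'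
                  exact ⟨i - M₀, congrArg g (by omega)⟩
                · exact absurd (hM₀ w (by simpa using hwr)) he'
          · funext x y
            apply propext
            constructor
            · intro hxy
              rcases Subgraph.sup_adj.1 hxy with h | h
              · exact h.1
              · rcases h with ⟨m, ⟨rfl, rfl⟩ | ⟨rfl, rfl⟩⟩
                · exact hrayH _
                · exact (hrayH _).symm
            · intro hxy
              rcases pth_adj_dichotomy hG (r := r) (H.adj_sub hxy) with h | h
              · exact aux x y hxy h
              · exact (aux y x hxy.symm h).symm

      have hinf : {w : V | l w = 1}.Infinite := by
        apply hcompl.mono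
        intro x hx
        show l x = 1
        rw [hl]
        dsimp only
        rw [dif_neg]
        simpa using hx
      have hbd : ∀ j k, j ≤ k → ∃ W : G.Walk (u (n j)) (u (n k)),
          ∀ x ∈ W.support, l x ≤ 1 / (j + 1) := by
        intro j k hjk
        rw [hup j, hup k]
        rcases le_total (p j) (p k) with h | h
        · refine ⟨pth hG (g (p j)) (g (p k)), ?_⟩
          intro x hx
          obtain ⟨i, hi1, -, rfl⟩ := hseg h hx
          rw [hlg i]
          exact one_div_cast_le (le_trans (hpk j) hi1)
        · refine ⟨(pth hG (g (p k)) (g (p j))).reverse, ?_⟩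
          intro x hx
          rw [Walk.support_reverse, List.mem_reverse] at hx
          obtain ⟨i, hi1, -, rfl⟩ := hseg h hx
          rw [hlg i]
          exact one_div_cast_le (le_trans (le_trans hjk (hpk k)) hi1)
      exact ⟨l, hl0, hnd, hinf, fun d hd => ⟨n, hnmono, gen u hu n hnmono hbd hd⟩⟩
    -- ============ CASE B2 : only finitely many u's on the ray ============
    · rw [Set.not_infinite] at hB1
      set B : Set ℕ := {m | u m ∉ Set.range g} with hBdef
      set c : ℕ → ℕ := fun m => e (u m) with hcB
      have hyp : ∀ (F : Finset ℕ) (N : ℕ), ∃ m, m ∈ B ∧ N < m ∧ c m ∉ F := by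
        intro F N
        set K := F.sup id + 1 with hK
        have hBK : ((Bset (g K)) \ ({m | u m ∈ Set.range g} ∪ Set.Iic N)).Infinite :=
          (hgGood K).diff (hB1.union (Set.finite_Iic N))
        obtain ⟨m, hm⟩ := hBK.nonempty
        have h1 : g K ∈ (pth hG r (u m)).support := hm.1
        have h2 : K ≤ e (u m) := heGe h1
        refine ⟨m, fun hr' => hm.2 (Or.inl hr'), ?_, fun hF => ?_⟩
        · by_contra hN
          exact hm.2 (Or.inr (by simpa using hN))
        · have := Finset.le_sup (f := id) hF
          rw [hcB] at hF
          have h3 : e (u m) ≤ F.sup id := Finset.le_sup (f := id) hF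
          omega
      obtain ⟨n, dd, hnmono, hddmono, hnB, hddB, hcinj, hcdisj, hnA⟩ :=
        ext_lemma B c (fun k => Finset.range k) hyp
      set E : ℕ → ℕ := fun k => e (u (n k)) with hE
      have hEk : ∀ k, k ≤ E k := by
        intro k
        have h1 := hnA k
        rw [Finset.mem_range] at h1
        have h2 : k ≤ c (n k) := by omega
        exact h2
      have hhangE : ∀ (x : V) (k : ℕ), x ∈ (pth hG (g (E k)) (u (n k))).support → e x = E k := by
        intro x k hx
        exact hhang hx
      set l : V → ℝ := fun x =>
        if hx : ∃ i, g i = x then 1 / ((Nat.find hx : ℝ) + 1)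
        else if hx2 : ∃ k, x ∈ (pth hG (g (E k)) (u (n k))).support then
          1 / ((E (Nat.find hx2) : ℝ) + 1) else 1 with hl
      have hlg : ∀ i, l (g i) = 1 / ((i : ℝ) + 1) := by
        intro i
        have hx : ∃ j, g j = g i := ⟨i, rfl⟩
        have hfind : Nat.find hx = i := hginj (Nat.find_spec hx)
        rw [hl]
        dsimp only
        rw [dif_pos hx, hfind]
      have hlhang : ∀ (x : V), (¬ ∃ i, g i = x) → ∀ k,
          x ∈ (pth hG (g (E k)) (u (n k))).support → l x = 1 / ((E k : ℝ) + 1) := by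
        intro x hxr k hxk
        have hx2 : ∃ k', x ∈ (pth hG (g (E k')) (u (n k'))).support := ⟨k, hxk⟩
        have hfind : Nat.find hx2 = k := by
          have hs := Nat.find_spec hx2
          have e1 := hhangE x _ hs
          have e2 := hhangE x _ hxk
          exact hcinj _ _ (e1.symm.trans e2 : E (Nat.find hx2) = E k)
        rw [hl]
        dsimp only
        rw [dif_neg hxr, dif_pos hx2, hfind]
      have hlpos : ∀ w, 0 < l w := by
        intro w
        rw [hl]
        dsimp only
        split_ifs with h1 h2
        · positivity
        · positivity
        · norm_num
      have hl0 : ∀ w, 0 ≤ l w := fun w => le_of_lt (hlpos w)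
      have hnd : NondegenerateLabeling G l := fun a b _ => lt_max_of_lt_left (hlpos a)
      have hinf : {w : V | l w = 1}.Infinite := by
        have hrange : (Set.range (fun t => u (dd t))).Infinite :=
          Set.infinite_range_of_injective (fun a b hab => hddmono.injective (hu hab))
        apply hrange.mono
        rintro x ⟨t, rfl⟩
        show l (u (dd t)) = 1
        have hxr : ¬ ∃ i, g i = u (dd t) := by
          intro ⟨i, hi⟩
          exact (hddB t) ⟨i, hi⟩
        have hx2 : ¬ ∃ k, u (dd t) ∈ (pth hG (g (E k)) (u (n k))).support := by
          rintro ⟨k, hk⟩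
          have e1 := hhangE _ k hk
          exact hcdisj t k e1
        rw [hl]
        dsimp only
        rw [dif_neg hxr, dif_neg hx2]
      have hbd : ∀ j k, j ≤ k → ∃ W : G.Walk (u (n j)) (u (n k)),
          ∀ x ∈ W.support, l x ≤ 1 / (j + 1) := by
        intro j k hjk
        set a := min (E j) (E k) with ha
        have haj : j ≤ a := le_min (hEk j) (le_trans hjk (hEk k))
        have key : ∀ m', j ≤ m' → a ≤ E m' →
            ∀ x ∈ (pth hG (g a) (u (n m'))).support, l x ≤ 1 / ((j : ℝ) + 1) := by
          intro m' hm' ham' x hx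
          have hga_mem : g a ∈ (pth hG r (u (n m'))).support :=
            pth_support_trans hG (heSpec (u (n m')))
              ((hraysupp (E m') (g a)).2 ⟨a, ham', rfl⟩)
          have hgE_mem : g (E m') ∈ (pth hG (g a) (u (n m'))).support := by
            have h0 := heSpec (u (n m'))
            rw [← pth_split hG hga_mem, Walk.mem_support_append_iff] at h0
            rcases h0 with h | h
            · obtain ⟨i', hi', heq⟩ := (hraysupp a (g (E m'))).1 h
              have : E m' = i' := hginj heq
              have haE : a = E m' := by omega
              rw [← haE]
              exact Walk.start_mem_support _
            · exact h
          rw [← pth_split hG hgE_mem, Walk.mem_support_append_iff] at hx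
          rcases hx with hx | hx
          · obtain ⟨i, hia, -, rfl⟩ := hseg ham' hx
            rw [hlg i]
            exact one_div_cast_le (le_trans haj hia)
          · by_cases hxr : ∃ i, g i = x
            · obtain ⟨i, rfl⟩ := hxr
              have hiE := hhangE _ m' hx
              rw [heg] at hiE
              rw [hlg i, hiE]
              exact one_div_cast_le (le_trans hm' (hEk m'))
            · rw [hlhang x hxr m' hx]
              exact one_div_cast_le (le_trans hm' (hEk m'))
        refine ⟨(pth hG (g a) (u (n j))).reverse.append (pth hG (g a) (u (n k))), ?_⟩
        intro x hx
        rw [Walk.mem_support_append_iff] at hx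
        rcases hx with h | h
        · rw [Walk.support_reverse, List.mem_reverse] at h
          exact key j le_rfl (min_le_left _ _) x h
        · exact key k hjk (min_le_right _ _) x h
      exact ⟨l, hl0, hnd, hinf, fun d hd => ⟨n, hnmono, gen u hu n hnmono hbd hd⟩⟩
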